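/- Let k ∈ ℂ, let x_1,…,x_n ∈ ℂ be pairwise distinct, let y_1,…,y_m ∈ ℂ be pairwise distinct, with x_i ≠ y_j for all i, j, and set p = ∏_{i=1}^n (X − x_i), q = ∏_{j=1}^m (X − y_j). Then {p,q}_2 + 2k·(p'·q − 2·q'·p) = 0 if and only if: for every i, k + ∑_{l≠i} 1/(x_i − x_l) − 2·∑_{j=1}^m 1/(x_i − y_j) = 0, and for every j, k − 2·∑_{l≠j} 1/(y_j − y_l) + ∑_{i=1}^n 1/(y_j − x_i) = 0. (These are the critical-point equations of the energy E = k∑_i Q_i z_i + ∑_{i<j} Q_iQ_j ln|z_i − z_j| of charges 1 at the x_i and −2 at the y_j in a homogeneous field of strength k.) -/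

import Mathlib

open Polynomial Finset


private theorem evalDerivProdAux {ι : Type*} [DecidableEq ι] (s : Finset ι) (c : ι → ℂ) (a : ℂ) :
    eval a (derivative (∏ j ∈ s, (X - C (c j)))) = ∑ j ∈ s, ∏ r ∈ s.erase j, (a - c r) := by
  induction s using Finset.induction_on with
  | empty => simp
  | insert _ _ h ih =>
    rename_i i s
    rw [Finset.prod_insert h, derivative_mul, Finset.sum_insert h, Finset.erase_insert h]
    simp only [eval_add, eval_mul, derivative_sub, derivative_X, derivative_C, sub_zero,
      one_mul, eval_sub, eval_X, eval_C, ih]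
    rw [Finset.mul_sum, eval_prod]
    simp only [eval_sub, eval_X, eval_C]
    congr 1
    apply Finset.sum_congr rfl
    intro j hj
    rw [Finset.erase_insert_of_ne (by rintro rfl; exact h hj),
      Finset.prod_insert (by simp [Finset.mem_erase]; tauto)]

private theorem sumProdEraseAux {ι : Type*} [DecidableEq ι] (s : Finset ι) (c : ι → ℂ) (a : ℂ)
    (h : ∀ r ∈ s, a - c r ≠ 0) :
    ∑ j ∈ s, ∏ r ∈ s.erase j, (a - c r) = (∏ r ∈ s, (a - c r)) * ∑ j ∈ s, (a - c j)⁻¹ := by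
  rw [Finset.mul_sum]
  refine Finset.sum_congr rfl fun j hj => ?_
  rw [← Finset.prod_erase_mul s _ hj, mul_assoc, mul_inv_cancel₀ (h j hj), mul_one]

private theorem evalDeriv2Aux (c : ℂ) (f : ℂ[X]) :
    eval c (derivative (derivative ((X - C c) * f))) = 2 * eval c (derivative f) := by
  have h1 : derivative ((X - C c) * f) = f + (X - C c) * derivative f := by
    rw [derivative_mul, derivative_X_sub_C, one_mul]
  rw [h1, derivative_add, derivative_mul, derivative_X_sub_C, one_mul]
  simp only [eval_add, eval_mul, eval_sub, eval_X, eval_C, sub_self, zero_mul, add_zero]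
  ring

private theorem degMulLtAux {u v : ℂ[X]} {a b : ℕ} (hu : u.degree < (a : WithBot ℕ))
    (hv : v.degree ≤ (b : WithBot ℕ)) : (u * v).degree < ((a + b : ℕ) : WithBot ℕ) := by
  rcases eq_or_ne u 0 with rfl | hu0
  · rw [zero_mul, degree_zero]; exact WithBot.bot_lt_coe _
  rcases eq_or_ne v 0 with rfl | hv0
  · rw [mul_zero, degree_zero]; exact WithBot.bot_lt_coe _
  refine lt_of_le_of_lt (degree_mul_le u v) ?_
  rw [degree_eq_natDegree hu0, degree_eq_natDegree hv0]
  rw [degree_eq_natDegree hu0] at hu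
  rw [degree_eq_natDegree hv0] at hv
  exact_mod_cast add_lt_add_of_lt_of_le (by exact_mod_cast hu) (by exact_mod_cast hv)

private theorem degMulLtAux' {u v : ℂ[X]} {a b : ℕ} (hu : u.degree ≤ (a : WithBot ℕ))
    (hv : v.degree < (b : WithBot ℕ)) : (u * v).degree < ((a + b : ℕ) : WithBot ℕ) := by
  rw [mul_comm, Nat.add_comm]
  exact degMulLtAux hv hu

private theorem degCmulAux (a : ℂ) (w : ℂ[X]) : (C a * w).degree ≤ w.degree := by
  refine le_trans (degree_mul_le _ _) ?_
  simpa using add_le_add (degree_C_le (a := a)) (le_refl w.degree)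

example (k : ℂ) (w : ℂ[X]) : (2 : ℂ[X]) * C k * w = C (2 * k) * w := by
  rw [C_mul, map_ofNat]

example : (4 : ℂ[X]) = C (4 : ℂ) := (map_ofNat C 4).symm

/-- Equilibrium of charges `1` at the `x i` and `-2` at the `y j` in a homogeneous
field of strength `k` is equivalent to `{p,q}_2 + 2k(p'q − 2q'p) = 0`. -/
theorem charges_in_field_equilibrium_iff_bilinear
    (k : ℂ) (n m : ℕ) (x : Fin n → ℂ) (y : Fin m → ℂ)
    (hx : Function.Injective x) (hy : Function.Injective y)
    (hxy : ∀ i j, x i ≠ y j)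
    (p q : ℂ[X])
    (hp : p = ∏ i, (X - C (x i))) (hq : q = ∏ j, (X - C (y j))) :
    derivative (derivative p) * q - 4 * derivative p * derivative q
        + 4 * p * derivative (derivative q)
        + 2 * C k * (derivative p * q - 2 * derivative q * p) = 0 ↔
      ((∀ i, k + (∑ l ∈ Finset.univ.erase i, 1 / (x i - x l))
          - 2 * ∑ j, 1 / (x i - y j) = 0) ∧
       (∀ j, k - 2 * (∑ l ∈ Finset.univ.erase j, 1 / (y j - y l))
          + ∑ i, 1 / (y j - x i) = 0)) := by
  classical
  subst hp hq
  -- nonvanishing of differences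
  have hxne : ∀ i, ∀ l ∈ (univ : Finset (Fin n)).erase i, x i - x l ≠ 0 := by
    intro i l hl h
    exact Finset.ne_of_mem_erase hl (hx (sub_eq_zero.mp h).symm)
  have hyne : ∀ j, ∀ l ∈ (univ : Finset (Fin m)).erase j, y j - y l ≠ 0 := by
    intro j l hl h
    exact Finset.ne_of_mem_erase hl (hy (sub_eq_zero.mp h).symm)
  have hxyne : ∀ i j, x i - y j ≠ 0 := fun i j h => hxy i j (sub_eq_zero.mp h)
  have hyxne : ∀ j i, y j - x i ≠ 0 := fun j i h => hxy i j (sub_eq_zero.mp h).symm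
  -- splitting off one factor
  have hsplitx : ∀ i : Fin n, (∏ l, (X - C (x l)))
      = (X - C (x i)) * ∏ l ∈ univ.erase i, (X - C (x l)) :=
    fun i => (Finset.mul_prod_erase univ _ (mem_univ i)).symm
  have hsplity : ∀ j : Fin m, (∏ l, (X - C (y l)))
      = (X - C (y j)) * ∏ l ∈ univ.erase j, (X - C (y l)) :=
    fun j => (Finset.mul_prod_erase univ _ (mem_univ j)).symm
  -- evaluation facts at the x i
  have hp0 : ∀ i, eval (x i) (∏ l, (X - C (x l))) = 0 := by
    intro i
    rw [eval_prod]
    exact Finset.prod_eq_zero (mem_univ i) (by simp)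
  have hp1 : ∀ i, eval (x i) (derivative (∏ l, (X - C (x l))))
      = ∏ l ∈ univ.erase i, (x i - x l) := by
    intro i
    rw [hsplitx i, derivative_mul, derivative_X_sub_C, one_mul]
    simp [eval_prod]
  have hp2 : ∀ i, eval (x i) (derivative (derivative (∏ l, (X - C (x l)))))
      = 2 * ((∏ l ∈ univ.erase i, (x i - x l)) * ∑ l ∈ univ.erase i, (x i - x l)⁻¹) := by
    intro i
    rw [hsplitx i, evalDeriv2Aux, evalDerivProdAux, sumProdEraseAux _ _ _ (hxne i)]
  have hq0 : ∀ j, eval (y j) (∏ l, (X - C (y l))) = 0 := by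
    intro j
    rw [eval_prod]
    exact Finset.prod_eq_zero (mem_univ j) (by simp)
  have hq1 : ∀ j, eval (y j) (derivative (∏ l, (X - C (y l))))
      = ∏ l ∈ univ.erase j, (y j - y l) := by
    intro j
    rw [hsplity j, derivative_mul, derivative_X_sub_C, one_mul]
    simp [eval_prod]
  have hq2 : ∀ j, eval (y j) (derivative (derivative (∏ l, (X - C (y l)))))
      = 2 * ((∏ l ∈ univ.erase j, (y j - y l)) * ∑ l ∈ univ.erase j, (y j - y l)⁻¹) := by
    intro j
    rw [hsplity j, evalDeriv2Aux, evalDerivProdAux, sumProdEraseAux _ _ _ (hyne j)]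
  have hqx0 : ∀ i, eval (x i) (∏ j, (X - C (y j))) = ∏ j, (x i - y j) := by
    intro i; simp [eval_prod]
  have hqx1 : ∀ i, eval (x i) (derivative (∏ j, (X - C (y j))))
      = (∏ j, (x i - y j)) * ∑ j, (x i - y j)⁻¹ := by
    intro i
    rw [evalDerivProdAux, sumProdEraseAux _ _ _ (fun r _ => hxyne i r)]
  have hpy0 : ∀ j, eval (y j) (∏ i, (X - C (x i))) = ∏ i, (y j - x i) := by
    intro j; simp [eval_prod]
  have hpy1 : ∀ j, eval (y j) (derivative (∏ i, (X - C (x i))))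
      = (∏ i, (y j - x i)) * ∑ i, (y j - x i)⁻¹ := by
    intro j
    rw [evalDerivProdAux, sumProdEraseAux _ _ _ (fun r _ => hyxne j r)]
  -- the key evaluation identities
  have keyx : ∀ i, eval (x i)
      (derivative (derivative (∏ l, (X - C (x l)))) * (∏ j, (X - C (y j)))
        - 4 * derivative (∏ l, (X - C (x l))) * derivative (∏ j, (X - C (y j)))
        + 4 * (∏ l, (X - C (x l))) * derivative (derivative (∏ j, (X - C (y j))))
        + 2 * C k * (derivative (∏ l, (X - C (x l))) * (∏ j, (X - C (y j)))
            - 2 * derivative (∏ j, (X - C (y j))) * (∏ l, (X - C (x l)))))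
      = 2 * (∏ l ∈ univ.erase i, (x i - x l)) * (∏ j, (x i - y j))
        * (k + (∑ l ∈ univ.erase i, (x i - x l)⁻¹) - 2 * ∑ j, (x i - y j)⁻¹) := by
    intro i
    simp only [eval_add, eval_sub, eval_mul, eval_ofNat, eval_C, hp0 i, hp1 i, hp2 i,
      hqx0 i, hqx1 i]
    ring
  have keyy : ∀ j, eval (y j)
      (derivative (derivative (∏ l, (X - C (x l)))) * (∏ l, (X - C (y l)))
        - 4 * derivative (∏ l, (X - C (x l))) * derivative (∏ l, (X - C (y l)))
        + 4 * (∏ l, (X - C (x l))) * derivative (derivative (∏ l, (X - C (y l))))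
        + 2 * C k * (derivative (∏ l, (X - C (x l))) * (∏ l, (X - C (y l)))
            - 2 * derivative (∏ l, (X - C (y l))) * (∏ l, (X - C (x l)))))
      = -4 * (∏ l ∈ univ.erase j, (y j - y l)) * (∏ i, (y j - x i))
        * (k - 2 * (∑ l ∈ univ.erase j, (y j - y l)⁻¹) + ∑ i, (y j - x i)⁻¹) := by
    intro j
    simp only [eval_add, eval_sub, eval_mul, eval_ofNat, eval_C, hq0 j, hq1 j, hq2 j,
      hpy0 j, hpy1 j]
    ring
  -- nonvanishing of the leading products
  have hAne : ∀ i, (∏ l ∈ univ.erase i, (x i - x l)) ≠ 0 :=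
    fun i => Finset.prod_ne_zero_iff.mpr (hxne i)
  have hBne : ∀ i, (∏ j, (x i - y j)) ≠ 0 :=
    fun i => Finset.prod_ne_zero_iff.mpr (fun j _ => hxyne i j)
  have hCne : ∀ j, (∏ l ∈ univ.erase j, (y j - y l)) ≠ 0 :=
    fun j => Finset.prod_ne_zero_iff.mpr (hyne j)
  have hDne : ∀ j, (∏ i, (y j - x i)) ≠ 0 :=
    fun j => Finset.prod_ne_zero_iff.mpr (fun i _ => hyxne j i)
  constructor
  · intro h
    constructor
    · intro i
      have h0 := congrArg (eval (x i)) h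
      rw [keyx i, eval_zero] at h0
      have h2 : (2 : ℂ) * (∏ l ∈ univ.erase i, (x i - x l)) * (∏ j, (x i - y j)) ≠ 0 :=
        mul_ne_zero (mul_ne_zero two_ne_zero (hAne i)) (hBne i)
      have h3 := (mul_eq_zero.mp h0).resolve_left h2
      simpa [one_div] using h3
    · intro j
      have h0 := congrArg (eval (y j)) h
      rw [keyy j, eval_zero] at h0
      have h2 : (-4 : ℂ) * (∏ l ∈ univ.erase j, (y j - y l)) * (∏ i, (y j - x i)) ≠ 0 :=
        mul_ne_zero (mul_ne_zero (by norm_num) (hCne j)) (hDne j)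
      have h3 := (mul_eq_zero.mp h0).resolve_left h2
      simpa [one_div] using h3
  · rintro ⟨h1, h2⟩
    -- degree bounds
    have hpne : (∏ i, (X - C (x i))) ≠ 0 :=
      (monic_prod_of_monic _ _ fun i _ => monic_X_sub_C (x i)).ne_zero
    have hqne : (∏ j, (X - C (y j))) ≠ 0 :=
      (monic_prod_of_monic _ _ fun j _ => monic_X_sub_C (y j)).ne_zero
    have hpdeg : (∏ i, (X - C (x i)) : ℂ[X]).degree = (n : WithBot ℕ) := by
      rw [degree_eq_natDegree hpne, natDegree_prod _ _ (fun i _ => X_sub_C_ne_zero (x i))]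
      simp
    have hqdeg : (∏ j, (X - C (y j)) : ℂ[X]).degree = (m : WithBot ℕ) := by
      rw [degree_eq_natDegree hqne, natDegree_prod _ _ (fun j _ => X_sub_C_ne_zero (y j))]
      simp
    have hp' : (derivative (∏ i, (X - C (x i)))).degree < (n : WithBot ℕ) :=
      hpdeg ▸ degree_derivative_lt hpne
    have hp'' : (derivative (derivative (∏ i, (X - C (x i))))).degree < (n : WithBot ℕ) :=
      lt_of_le_of_lt degree_derivative_le hp'
    have hq' : (derivative (∏ j, (X - C (y j)))).degree < (m : WithBot ℕ) :=
      hqdeg ▸ degree_derivative_lt hqne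
    have hq'' : (derivative (derivative (∏ j, (X - C (y j))))).degree < (m : WithBot ℕ) :=
      lt_of_le_of_lt degree_derivative_le hq'
    have b1 : (derivative (derivative (∏ i, (X - C (x i)))) * (∏ j, (X - C (y j)))).degree
        < ((n + m : ℕ) : WithBot ℕ) := degMulLtAux hp'' hqdeg.le
    have b2 : ((4 : ℂ[X]) * derivative (∏ i, (X - C (x i)))
        * derivative (∏ j, (X - C (y j)))).degree < ((n + m : ℕ) : WithBot ℕ) := by
      rw [show ((4 : ℂ[X])) = C (4 : ℂ) from (map_ofNat C 4).symm, mul_assoc]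
      exact lt_of_le_of_lt (degCmulAux _ _) (degMulLtAux hp' hq'.le)
    have b3 : ((4 : ℂ[X]) * (∏ i, (X - C (x i)))
        * derivative (derivative (∏ j, (X - C (y j))))).degree < ((n + m : ℕ) : WithBot ℕ) := by
      rw [show ((4 : ℂ[X])) = C (4 : ℂ) from (map_ofNat C 4).symm, mul_assoc]
      exact lt_of_le_of_lt (degCmulAux _ _) (degMulLtAux' hpdeg.le hq'')
    have b4 : ((2 : ℂ[X]) * C k * (derivative (∏ i, (X - C (x i))) * (∏ j, (X - C (y j)))
        - 2 * derivative (∏ j, (X - C (y j))) * (∏ i, (X - C (x i))))).degree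
        < ((n + m : ℕ) : WithBot ℕ) := by
      rw [show ((2 : ℂ[X]) * C k) = C (2 * k) from by rw [C_mul, map_ofNat]]
      refine lt_of_le_of_lt (degCmulAux _ _) ?_
      refine lt_of_le_of_lt (degree_sub_le _ _) (max_lt (degMulLtAux hp' hqdeg.le) ?_)
      rw [show ((2 : ℂ[X])) = C (2 : ℂ) from (map_ofNat C 2).symm, mul_assoc]
      refine lt_of_le_of_lt (degCmulAux _ _) ?_
      rw [show n + m = m + n from Nat.add_comm n m]
      exact degMulLtAux hq' hpdeg.le
    have hdeg : (derivative (derivative (∏ i, (X - C (x i)))) * (∏ j, (X - C (y j)))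
        - 4 * derivative (∏ i, (X - C (x i))) * derivative (∏ j, (X - C (y j)))
        + 4 * (∏ i, (X - C (x i))) * derivative (derivative (∏ j, (X - C (y j))))
        + 2 * C k * (derivative (∏ i, (X - C (x i))) * (∏ j, (X - C (y j)))
            - 2 * derivative (∏ j, (X - C (y j))) * (∏ i, (X - C (x i))))).degree
        < ((n + m : ℕ) : WithBot ℕ) := by
      refine lt_of_le_of_lt (degree_add_le _ _) (max_lt ?_ b4)
      refine lt_of_le_of_lt (degree_add_le _ _) (max_lt ?_ b3)
      exact lt_of_le_of_lt (degree_sub_le _ _) (max_lt b1 b2)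
    -- vanishing at n + m distinct points
    have hinj : Function.Injective (Sum.elim x y) := by
      rintro (i | i) (j | j) h
      · exact congrArg Sum.inl (hx h)
      · exact absurd h (hxy i j)
      · exact absurd h.symm (hxy j i)
      · exact congrArg Sum.inr (hy h)
    refine eq_zero_of_degree_lt_of_eval_index_eq_zero (v := Sum.elim x y)
      (univ : Finset (Fin n ⊕ Fin m)) (hinj.injOn) ?_ ?_
    · simpa using hdeg
    · rintro (i | j) _
      · rw [Sum.elim_inl, keyx i,
          show k + (∑ l ∈ univ.erase i, (x i - x l)⁻¹) - 2 * ∑ j, (x i - y j)⁻¹ = 0 from by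
            simpa [one_div] using h1 i, mul_zero]
      · rw [Sum.elim_inr, keyy j,
          show k - 2 * (∑ l ∈ univ.erase j, (y j - y l)⁻¹) + ∑ i, (y j - x i)⁻¹ = 0 from by
            simpa [one_div] using h2 j, mul_zero]
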